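/- arXiv:2207.13042 — 2 statements merged into one kernel-verified Lean document; each statement's English description precedes it below -/
import Mathlib

section
/- Let E be a Banach space and b : E → L(E;ℝ) a map of the form b(x) = ∫_{r}^{∞} e^{−λt} G_t(x) dt where each G_t : E → L(E;ℝ) satisfies, for all x, h ∈ E, ‖G_t(x+2h) − 2G_t(x+h) + G_t(x)‖ ≤ C₃ min(1,t)^{−3/2} M ‖h‖², with r = ‖h‖² ∈ (0,1), λ > 0, C₃ > 0, M ≥ 0. Then ‖b(x+2h) − 2b(x+h) + b(x)‖ ≤ 2C₃(1 + K(λ)) M ‖h‖, where K(λ) = sup_{t>0} t^{3/2} e^{−λt}. -/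
open MeasureTheory

set_option maxHeartbeats 1000000 in
theorem stmt_13 {E : Type*} [NormedAddCommGroup E] [NormedSpace ℝ E]
    (lam C₃ M : ℝ) (hlam : 0 < lam) (hC₃ : 0 < C₃) (hM : 0 ≤ M)
    (G : ℝ → E → (E →L[ℝ] ℝ)) (h : E) (hh : 0 < ‖h‖) (hh1 : ‖h‖ < 1)
    (hint : ∀ x : E,
      IntegrableOn (fun t => Real.exp (-(lam * t)) • G t x) (Set.Ioi (‖h‖ ^ 2)))
    (hG : ∀ t > (0:ℝ), ∀ x : E,
      ‖G t (x + 2 • h) - 2 • G t (x + h) + G t x‖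
        ≤ C₃ * (min 1 t) ^ (-(3 / 2 : ℝ)) * M * ‖h‖ ^ 2) :
    ∀ x : E,
      ‖(∫ t in Set.Ioi (‖h‖ ^ 2), Real.exp (-(lam * t)) • G t (x + 2 • h))
          - 2 • (∫ t in Set.Ioi (‖h‖ ^ 2), Real.exp (-(lam * t)) • G t (x + h))
          + ∫ t in Set.Ioi (‖h‖ ^ 2), Real.exp (-(lam * t)) • G t x‖
        ≤ 2 * C₃
            * (1 + sSup {s : ℝ | ∃ t > (0:ℝ), s = t ^ ((3:ℝ) / 2) * Real.exp (-(lam * t))})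
            * M * ‖h‖ := by
  intro x
  have hr0 : (0:ℝ) < ‖h‖ ^ 2 := by positivity
  set S : Set ℝ := {s : ℝ | ∃ t > (0:ℝ), s = t ^ ((3:ℝ) / 2) * Real.exp (-(lam * t))} with hS
  -- boundedness of S
  have hbdd : BddAbove S := by
    refine ⟨4 / lam ^ 2 + 1, ?_⟩
    rintro s ⟨t, ht, rfl⟩
    have het : Real.exp (-(lam * t)) ≤ 1 := by
      rw [Real.exp_le_one_iff]; nlinarith
    have hep := Real.exp_pos (-(lam * t))
    have hC : 0 ≤ 4 / lam ^ 2 := by positivity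
    rcases le_total t 1 with h1 | h1
    · have h32 : t ^ ((3:ℝ)/2) ≤ 1 := Real.rpow_le_one ht.le h1 (by norm_num)
      have h32' : 0 ≤ t ^ ((3:ℝ)/2) := Real.rpow_nonneg ht.le _
      nlinarith
    · have h32 : t ^ ((3:ℝ)/2) ≤ t ^ (2:ℝ) := Real.rpow_le_rpow_of_exponent_le h1 (by norm_num)
      have ht2 : t ^ (2:ℝ) = t ^ 2 := Real.rpow_two t
      have hs : lam * t / 2 ≤ Real.exp (lam * t / 2) := by
        have := Real.add_one_le_exp (lam * t / 2); linarith
      have hexp2 : Real.exp (lam * t / 2) * Real.exp (lam * t / 2) = Real.exp (lam * t) := by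
        rw [← Real.exp_add]; ring_nf
      have hei : Real.exp (lam * t) * Real.exp (-(lam * t)) = 1 := by
        rw [← Real.exp_add]; simp
      have ht0 : 0 ≤ t := ht.le
      have key : t ^ 2 * Real.exp (-(lam * t)) ≤ 4 / lam ^ 2 := by
        have h1' : t ≤ 2 / lam * Real.exp (lam * t / 2) := by
          rw [div_mul_eq_mul_div, le_div_iff₀ hlam]
          nlinarith
        have h2' : t ^ 2 ≤ 4 / lam ^ 2 * Real.exp (lam * t) := by
          have := mul_le_mul h1' h1' ht0 (by positivity)
          calc t ^ 2 = t * t := sq t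
            _ ≤ (2 / lam * Real.exp (lam * t / 2)) * (2 / lam * Real.exp (lam * t / 2)) := this
            _ = 4 / lam ^ 2 * Real.exp (lam * t) := by rw [← hexp2]; field_simp; ring
        calc t ^ 2 * Real.exp (-(lam * t)) ≤ (4 / lam ^ 2 * Real.exp (lam * t)) * Real.exp (-(lam * t)) :=
              mul_le_mul_of_nonneg_right h2' hep.le
          _ = 4 / lam ^ 2 := by rw [mul_assoc, hei, mul_one]
      have : t ^ ((3:ℝ)/2) * Real.exp (-(lam * t)) ≤ t ^ 2 * Real.exp (-(lam * t)) := by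
        apply mul_le_mul_of_nonneg_right _ hep.le
        rw [← ht2]; exact h32
      linarith
  have hmem1 : (1:ℝ) ^ ((3:ℝ)/2) * Real.exp (-(lam * 1)) ∈ S := ⟨1, one_pos, rfl⟩
  have hK0 : 0 ≤ sSup S := by
    have := le_csSup hbdd hmem1
    have hp : 0 < (1:ℝ) ^ ((3:ℝ)/2) * Real.exp (-(lam * 1)) := by positivity
    linarith
  have hKt : ∀ t : ℝ, 0 < t → t ^ ((3:ℝ)/2) * Real.exp (-(lam * t)) ≤ sSup S :=
    fun t ht => le_csSup hbdd ⟨t, ht, rfl⟩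
  set K := sSup S
  clear_value K
  -- combine integrals
  have hI1 := hint (x + 2 • h)
  have hI2 := hint (x + h)
  have hI3 := hint x
  have hcomb :
      (∫ t in Set.Ioi (‖h‖ ^ 2), Real.exp (-(lam * t)) • G t (x + 2 • h))
          - 2 • (∫ t in Set.Ioi (‖h‖ ^ 2), Real.exp (-(lam * t)) • G t (x + h))
          + ∫ t in Set.Ioi (‖h‖ ^ 2), Real.exp (-(lam * t)) • G t x
        = ∫ t in Set.Ioi (‖h‖ ^ 2),
            Real.exp (-(lam * t)) • (G t (x + 2 • h) - 2 • G t (x + h) + G t x) := by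
    have heq : (fun t => Real.exp (-(lam * t)) • (G t (x + 2 • h) - 2 • G t (x + h) + G t x))
        = fun t => (Real.exp (-(lam * t)) • G t (x + 2 • h)
            - (Real.exp (-(lam * t)) • G t (x + h) + Real.exp (-(lam * t)) • G t (x + h)))
            + Real.exp (-(lam * t)) • G t x := by
      funext t
      simp [two_smul, smul_add, smul_sub]
    have hI22 : IntegrableOn (fun t => Real.exp (-(lam * t)) • G t (x + h)
        + Real.exp (-(lam * t)) • G t (x + h)) (Set.Ioi (‖h‖ ^ 2)) := by have := IntegrableOn.add (ε' := E →L[ℝ] ℝ) hI2 hI2; exact this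
    have hI12 : IntegrableOn (fun t => Real.exp (-(lam * t)) • G t (x + 2 • h)
        - (Real.exp (-(lam * t)) • G t (x + h) + Real.exp (-(lam * t)) • G t (x + h)))
        (Set.Ioi (‖h‖ ^ 2)) := hI1.sub hI22
    rw [heq, integral_add hI12 hI3, integral_sub hI1 hI22, integral_add hI2 hI2]
    abel
  rw [hcomb]
  -- norm bound
  have hbound : ∀ᵐ t ∂(volume.restrict (Set.Ioi (‖h‖ ^ 2))),
      ‖Real.exp (-(lam * t)) • (G t (x + 2 • h) - 2 • G t (x + h) + G t x)‖
        ≤ (1 + K) * C₃ * M * ‖h‖ ^ 2 * t ^ (-(3/2 : ℝ)) := by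
    filter_upwards [ae_restrict_mem measurableSet_Ioi] with t ht
    have ht0 : 0 < t := lt_trans hr0 ht
    have hep := Real.exp_pos (-(lam * t))
    have hns := norm_smul (Real.exp (-(lam * t))) (G t (x + 2 • h) - 2 • G t (x + h) + G t x)
    rw [hns, Real.norm_eq_abs, abs_of_pos hep]
    have h1 := hG t ht0 x
    have hmain : Real.exp (-(lam * t)) * (min 1 t) ^ (-(3/2 : ℝ)) ≤ (1 + K) * t ^ (-(3/2 : ℝ)) := by
      rcases le_total t 1 with h1t | h1t
      · rw [min_eq_right h1t]
        have het : Real.exp (-(lam * t)) ≤ 1 := by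
          rw [Real.exp_le_one_iff]; nlinarith
        have htp : 0 ≤ t ^ (-(3/2 : ℝ)) := Real.rpow_nonneg ht0.le _
        calc Real.exp (-(lam * t)) * t ^ (-(3/2 : ℝ)) ≤ 1 * t ^ (-(3/2 : ℝ)) :=
              mul_le_mul_of_nonneg_right het htp
          _ ≤ (1 + K) * t ^ (-(3/2 : ℝ)) := mul_le_mul_of_nonneg_right (by linarith) htp
      · rw [min_eq_left h1t]
        rw [Real.one_rpow, mul_one]
        have hKt' := hKt t ht0
        have hinv : t ^ ((3:ℝ)/2) * t ^ (-(3/2 : ℝ)) = 1 := by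
          rw [← Real.rpow_add ht0]; norm_num
        have htp : 0 < t ^ (-(3/2 : ℝ)) := Real.rpow_pos_of_pos ht0 _
        have : Real.exp (-(lam * t)) = t ^ (-(3/2 : ℝ)) * (t ^ ((3:ℝ)/2) * Real.exp (-(lam * t))) := by
          rw [← mul_assoc, mul_comm (t ^ (-(3/2:ℝ)))  (t ^ ((3:ℝ)/2)), hinv, one_mul]
        rw [this]
        calc t ^ (-(3/2 : ℝ)) * (t ^ ((3:ℝ)/2) * Real.exp (-(lam * t)))
            ≤ t ^ (-(3/2 : ℝ)) * K := mul_le_mul_of_nonneg_left hKt' htp.le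
          _ = K * t ^ (-(3/2 : ℝ)) := mul_comm _ _
          _ ≤ (1 + K) * t ^ (-(3/2 : ℝ)) := mul_le_mul_of_nonneg_right (by linarith) htp.le
    calc Real.exp (-(lam * t)) * ‖G t (x + 2 • h) - 2 • G t (x + h) + G t x‖
        ≤ Real.exp (-(lam * t)) * (C₃ * (min 1 t) ^ (-(3/2 : ℝ)) * M * ‖h‖ ^ 2) :=
          mul_le_mul_of_nonneg_left h1 hep.le
      _ = (Real.exp (-(lam * t)) * (min 1 t) ^ (-(3/2 : ℝ))) * (C₃ * M * ‖h‖ ^ 2) := by ring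
      _ ≤ ((1 + K) * t ^ (-(3/2 : ℝ))) * (C₃ * M * ‖h‖ ^ 2) := by
          apply mul_le_mul_of_nonneg_right hmain (by positivity)
      _ = (1 + K) * C₃ * M * ‖h‖ ^ 2 * t ^ (-(3/2 : ℝ)) := by ring
  have hgint : Integrable (fun t => (1 + K) * C₃ * M * ‖h‖ ^ 2 * t ^ (-(3/2 : ℝ)))
      (volume.restrict (Set.Ioi (‖h‖ ^ 2))) :=
    (integrableOn_Ioi_rpow_of_lt (by norm_num) hr0).const_mul _
  have hle := norm_integral_le_of_norm_le hgint hbound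
  refine hle.trans ?_
  rw [integral_const_mul, integral_Ioi_rpow_of_lt (by norm_num) hr0]
  have hval : -(‖h‖ ^ 2) ^ (-(3/2:ℝ) + 1) / (-(3/2:ℝ) + 1) = 2 / ‖h‖ := by
    rw [show (-(3/2:ℝ) + 1) = -(1/2 : ℝ) by norm_num]
    rw [← Real.rpow_natCast ‖h‖ 2, ← Real.rpow_mul hh.le]
    norm_num
    rw [Real.rpow_neg_one]
    field_simp
  rw [hval]
  have : (1 + K) * C₃ * M * ‖h‖ ^ 2 * (2 / ‖h‖) = 2 * C₃ * (1 + K) * M * (‖h‖ ^ 2 / ‖h‖) := by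
    ring
  rw [this, sq, mul_div_assoc, div_self hh.ne', mul_one]
end

section
/- Let E be a Banach space, T > 0 fixed, γ ∈ (0,1), α ∈ (0, 2γ/(1+γ)), c_α > 0, M ≥ 0. Suppose for each s > 0 maps G₁(s), G₂(s) from E into L(E;ℝ)-valued and bilinear-valued operators respectively satisfy ‖G₁(s)(x+h) − G₁(s)(x)‖ ≤ 2c_α min(1,s)^{−(1−α)(1+γ)/2} M for all x,h, and G₁(s)(x+h) − G₁(s)(x) = ∫₀¹ G₂(s)(x+σh)(h,·)dσ with ‖G₂(s)(x)‖ ≤ c_α min(1,s)^{−(2−α)(1+γ)/2} M. Then w(x) := ∫₀^T G₁(s)(x) ds satisfies, for all x,h ∈ E with 0 < ‖h‖ < 1: ‖w(x+h) − w(x)‖ ≤ C M ‖h‖^{α + (1−γ)/(1+γ)} with C = c_α ( 4/(2−(1−α)(1+γ)) + 2/((2−α)(1+γ)−2) + max(T−1, 0) ). -/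
open MeasureTheory

private lemma piece_bound {E : Type*} [NormedAddCommGroup E] [NormedSpace ℝ E]
    (f : ℝ → E) (a b K e : ℝ) (hab : a ≤ b) (h0a : 0 ≤ a) (hK : 0 ≤ K)
    (hbd : ∀ s ∈ Set.Ioc a b, ‖f s‖ ≤ K * s ^ e)
    (hexp : -1 < e ∨ e ≠ -1 ∧ (0:ℝ) ∉ Set.uIcc a b) :
    ‖∫ s in a..b, f s‖ ≤ K * ((b ^ (e + 1) - a ^ (e + 1)) / (e + 1)) := by
  have hg : IntervalIntegrable (fun s => K * s ^ e) volume a b := by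
    rcases hexp with he | ⟨_, h0⟩
    · exact (intervalIntegral.intervalIntegrable_rpow' he).const_mul K
    · exact (intervalIntegral.intervalIntegrable_rpow (Or.inr h0)).const_mul K
  have hle : ‖∫ s in a..b, f s‖ ≤ |∫ s in a..b, K * s ^ e| := by
    apply intervalIntegral.norm_integral_le_abs_of_norm_le _ hg
    rw [Set.uIoc_of_le hab]
    filter_upwards [ae_restrict_mem measurableSet_Ioc] with s hs using hbd s hs
  have hnn : 0 ≤ ∫ s in a..b, K * s ^ e :=
    intervalIntegral.integral_nonneg hab fun s hs =>
      mul_nonneg hK (Real.rpow_nonneg (h0a.trans hs.1) e)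
  rwa [abs_of_nonneg hnn, intervalIntegral.integral_const_mul, integral_rpow hexp] at hle

set_option maxHeartbeats 1000000 in
theorem stmt_17 {E : Type*} [NormedAddCommGroup E] [NormedSpace ℝ E]
    (T γ α cα M : ℝ) (hT : 0 < T) (hγ : γ ∈ Set.Ioo (0:ℝ) 1)
    (hα : α ∈ Set.Ioo (0:ℝ) (2 * γ / (1 + γ))) (hcα : 0 < cα) (hM : 0 ≤ M)
    (G₁ : ℝ → E → (E →L[ℝ] ℝ)) (G₂ : ℝ → E → (E →L[ℝ] E →L[ℝ] ℝ))
    (h1 : ∀ s > (0:ℝ), ∀ x h : E,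
      ‖G₁ s (x + h) - G₁ s x‖ ≤ 2 * cα * (min 1 s) ^ (-((1 - α) * (1 + γ) / 2)) * M)
    (hrep : ∀ s > (0:ℝ), ∀ x h : E,
      G₁ s (x + h) - G₁ s x = ∫ σ in (0:ℝ)..1, (G₂ s (x + σ • h)) h)
    (h2 : ∀ s > (0:ℝ), ∀ x : E,
      ‖G₂ s x‖ ≤ cα * (min 1 s) ^ (-((2 - α) * (1 + γ) / 2)) * M)
    (hint : ∀ x : E, IntervalIntegrable (fun s => G₁ s x) volume 0 T) :
    ∀ x h : E, 0 < ‖h‖ → ‖h‖ < 1 →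
      ‖(∫ s in (0:ℝ)..T, G₁ s (x + h)) - ∫ s in (0:ℝ)..T, G₁ s x‖
        ≤ cα * (4 / (2 - (1 - α) * (1 + γ)) + 2 / ((2 - α) * (1 + γ) - 2) + max (T - 1) 0)
            * M * ‖h‖ ^ (α + (1 - γ) / (1 + γ)) := by
  intro x h hh0 hh1
  obtain ⟨hγ0, hγ1⟩ := hγ
  obtain ⟨hα0, hα2⟩ := hα
  have h1γ : (0:ℝ) < 1 + γ := by linarith
  have hαγ : α * (1 + γ) < 2 * γ := (lt_div_iff₀ h1γ).mp hα2
  have hα1 : α < 1 := by nlinarith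
  set p := (1 - α) * (1 + γ) / 2 with hp
  set q := (2 - α) * (1 + γ) / 2 with hq
  set β := α + (1 - γ) / (1 + γ) with hβ
  have hp0 : 0 < p := by rw [hp]; nlinarith
  have hp1 : p < 1 := by rw [hp]; nlinarith
  have hq1 : 1 < q := by rw [hq]; nlinarith
  have hβ0 : 0 < β := by
    have hdd : 0 < (1 - γ) / (1 + γ) := div_pos (by linarith) h1γ
    rw [hβ]; linarith
  have hβ1 : β ≤ 1 := by
    have hd : (1 - γ) / (1 + γ) ≤ 1 - α := by rw [div_le_iff₀ h1γ]; nlinarith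
    rw [hβ]; linarith
  set r := ‖h‖ ^ (2 / (1 + γ)) with hr
  have hr0 : 0 < r := Real.rpow_pos_of_pos hh0 _
  have hr1 : r < 1 := Real.rpow_lt_one (norm_nonneg h) hh1 (by positivity)
  set Hβ := ‖h‖ ^ β with hHβ
  have hHβ0 : 0 < Hβ := Real.rpow_pos_of_pos hh0 _
  -- exponent identities
  have hrp : r ^ (1 - p) = Hβ := by
    rw [hr, hHβ, ← Real.rpow_mul (norm_nonneg h)]
    congr 1
    rw [hp, hβ]; field_simp; ring
  have hrq : ‖h‖ * r ^ (1 - q) = Hβ := by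
    rw [hr, hHβ, ← Real.rpow_mul (norm_nonneg h)]
    nth_rewrite 1 [← Real.rpow_one ‖h‖]
    rw [← Real.rpow_add hh0]
    congr 1
    rw [hq, hβ]; field_simp; ring
  have hhβ : ‖h‖ ≤ Hβ := by
    rw [hHβ]
    nth_rewrite 1 [← Real.rpow_one ‖h‖]
    exact Real.rpow_le_rpow_of_exponent_ge hh0 hh1.le hβ1
  -- the difference function
  set f : ℝ → (E →L[ℝ] ℝ) := fun s => G₁ s (x + h) - G₁ s x with hf
  have hfInt : IntervalIntegrable f volume 0 T := (hint (x + h)).sub (hint x)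
  have hfsub : ∀ a b : ℝ, 0 ≤ a → a ≤ b → b ≤ T → IntervalIntegrable f volume a b := by
    intro a b ha hab hb
    apply hfInt.mono_set
    rw [Set.uIcc_of_le hT.le, Set.uIcc_of_le hab]
    exact Set.Icc_subset_Icc ha hb
  -- pointwise bounds
  have hbd1 : ∀ u : ℝ, u ≤ 1 → ∀ s ∈ Set.Ioc (0:ℝ) u, ‖f s‖ ≤ (2 * cα * M) * s ^ (-p) := by
    intro u hu s hs
    simp only [hf]
    have hb := h1 s hs.1 x h
    rw [min_eq_right (hs.2.trans hu)] at hb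
    exact hb.trans_eq (by ring)
  have hbd2 : ∀ s : ℝ, 0 < s → ‖f s‖ ≤ cα * (min 1 s) ^ (-q) * M * ‖h‖ := by
    intro s hs
    have hbG : ∀ σ ∈ Set.uIoc (0:ℝ) 1, ‖(G₂ s (x + σ • h)) h‖ ≤ cα * (min 1 s) ^ (-q) * M * ‖h‖ := by
      intro σ _
      calc ‖(G₂ s (x + σ • h)) h‖ ≤ ‖G₂ s (x + σ • h)‖ * ‖h‖ := ContinuousLinearMap.le_opNorm _ _
        _ ≤ cα * (min 1 s) ^ (-q) * M * ‖h‖ :=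
          mul_le_mul_of_nonneg_right (h2 s hs _) (norm_nonneg h)
    have hb := intervalIntegral.norm_integral_le_of_norm_le_const hbG
    simp only [hf]
    rw [hrep s hs x h]
    simpa using hb
  -- piece estimates
  have P1 : ∀ u : ℝ, 0 < u → u ≤ r → ‖∫ s in (0:ℝ)..u, f s‖ ≤ 2 * cα * M * (Hβ / (1 - p)) := by
    intro u hu0 hur
    have hu1 : u ≤ 1 := hur.trans hr1.le
    have hb := piece_bound f 0 u (2 * cα * M) (-p) hu0.le le_rfl (by positivity) (hbd1 u hu1) (Or.inl (by linarith))
    rw [Real.zero_rpow (show -p + 1 ≠ 0 by intro hc; linarith), sub_zero] at hb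
    have hup : u ^ (-p + 1) ≤ Hβ := by
      rw [← hrp, show -p + 1 = 1 - p by ring]
      exact Real.rpow_le_rpow hu0.le hur (by linarith)
    calc ‖∫ s in (0:ℝ)..u, f s‖ ≤ (2 * cα * M) * (u ^ (-p + 1) / (-p + 1)) := hb
      _ ≤ (2 * cα * M) * (Hβ / (-p + 1)) :=
        mul_le_mul_of_nonneg_left ((div_le_div_iff_of_pos_right (by linarith)).mpr hup) (by positivity)
      _ = 2 * cα * M * (Hβ / (1 - p)) := by ring_nf
  have P2 : ∀ b : ℝ, r ≤ b → b ≤ 1 → ‖∫ s in r..b, f s‖ ≤ cα * M * (Hβ / (q - 1)) := by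
    intro b hrb hb1
    have hbd : ∀ s ∈ Set.Ioc r b, ‖f s‖ ≤ (cα * M * ‖h‖) * s ^ (-q) := by
      intro s hs
      have hb := hbd2 s (hr0.trans hs.1)
      rw [min_eq_right (hs.2.trans hb1)] at hb
      exact hb.trans_eq (by ring)
    have h0not : (0:ℝ) ∉ Set.uIcc r b := by
      rw [Set.uIcc_of_le hrb]
      intro hc
      exact absurd hc.1 (by linarith)
    have hb := piece_bound f r b (cα * M * ‖h‖) (-q) hrb hr0.le (by positivity) hbd
      (Or.inr ⟨ne_of_lt (by linarith), h0not⟩)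
    have hbpos : 0 ≤ b ^ (-q + 1) := Real.rpow_nonneg (hr0.le.trans hrb) _
    have key : (b ^ (-q + 1) - r ^ (-q + 1)) / (-q + 1) ≤ r ^ (-q + 1) / (q - 1) := by
      have he : (b ^ (-q + 1) - r ^ (-q + 1)) / (-q + 1)
          = (r ^ (-q + 1) - b ^ (-q + 1)) / (q - 1) := by
        rw [show -q + 1 = -(q - 1) by ring, div_neg, ← neg_div, neg_sub]
      rw [he]
      exact (div_le_div_iff_of_pos_right (by linarith)).mpr (by linarith)
    calc ‖∫ s in r..b, f s‖ ≤ (cα * M * ‖h‖) * ((b ^ (-q + 1) - r ^ (-q + 1)) / (-q + 1)) := hb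
      _ ≤ (cα * M * ‖h‖) * (r ^ (-q + 1) / (q - 1)) :=
        mul_le_mul_of_nonneg_left key (by positivity)
      _ = cα * M * (Hβ / (q - 1)) := by
        rw [show -q + 1 = 1 - q by ring, ← hrq]; ring
  have P3 : 1 < T → ‖∫ s in (1:ℝ)..T, f s‖ ≤ cα * M * Hβ * (T - 1) := by
    intro h1T
    have hbd : ∀ s ∈ Set.uIoc (1:ℝ) T, ‖f s‖ ≤ cα * M * ‖h‖ := by
      rw [Set.uIoc_of_le h1T.le]
      intro s hs
      have hb := hbd2 s (by linarith [hs.1])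
      rw [min_eq_left (le_of_lt hs.1), Real.one_rpow] at hb
      exact hb.trans_eq (by ring)
    have hb := intervalIntegral.norm_integral_le_of_norm_le_const hbd
    rw [abs_of_pos (by linarith : (0:ℝ) < T - 1)] at hb
    calc ‖∫ s in (1:ℝ)..T, f s‖ ≤ cα * M * ‖h‖ * (T - 1) := hb
      _ ≤ cα * M * Hβ * (T - 1) :=
        mul_le_mul_of_nonneg_right (mul_le_mul_of_nonneg_left hhβ (by positivity)) (by linarith)
  -- arithmetic identity for the target
  have hden1 : 2 - (1 - α) * (1 + γ) = 2 * (1 - p) := by rw [hp]; ring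
  have hden2 : (2 - α) * (1 + γ) - 2 = 2 * (q - 1) := by rw [hq]; ring
  have goalEq : cα * (4 / (2 - (1 - α) * (1 + γ)) + 2 / ((2 - α) * (1 + γ) - 2) + max (T - 1) 0)
        * M * Hβ
      = 2 * cα * M * (Hβ / (1 - p)) + cα * M * (Hβ / (q - 1)) + cα * M * Hβ * max (T - 1) 0 := by
    rw [hden1, hden2]
    have h1p : (1:ℝ) - p ≠ 0 := by intro hc; linarith
    have hq1' : q - 1 ≠ 0 := by intro hc; linarith
    field_simp
    ring
  have hT2 : 0 ≤ cα * M * (Hβ / (q - 1)) :=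
    mul_nonneg (mul_nonneg hcα.le hM) (div_nonneg hHβ0.le (by linarith))
  have hT3 : 0 ≤ cα * M * Hβ * max (T - 1) 0 :=
    mul_nonneg (mul_nonneg (mul_nonneg hcα.le hM) hHβ0.le) (le_max_right _ _)
  -- rewrite the goal as a single integral of f
  rw [← intervalIntegral.integral_sub (hint (x + h)) (hint x), ← hf]
  rcases le_or_gt T r with hTr | hrT
  · -- T ≤ r : only the first piece
    have hP := P1 T hT hTr
    rw [goalEq]
    linarith
  · rcases le_or_gt T 1 with hT1 | h1T
    · -- r < T ≤ 1 : split at r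
      have hA := hfsub 0 r le_rfl hr0.le (by linarith)
      have hB := hfsub r T hr0.le hrT.le le_rfl
      rw [← intervalIntegral.integral_add_adjacent_intervals hA hB]
      calc ‖(∫ s in (0:ℝ)..r, f s) + ∫ s in r..T, f s‖
          ≤ ‖∫ s in (0:ℝ)..r, f s‖ + ‖∫ s in r..T, f s‖ := norm_add_le _ _
        _ ≤ 2 * cα * M * (Hβ / (1 - p)) + cα * M * (Hβ / (q - 1)) :=
          add_le_add (P1 r hr0 le_rfl) (P2 T hrT.le hT1)
        _ ≤ _ := by rw [goalEq]; linarith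
    · -- r < 1 < T : split at r and 1
      have hA := hfsub 0 r le_rfl hr0.le (by linarith)
      have hB := hfsub r 1 hr0.le hr1.le h1T.le
      have hC := hfsub 1 T (by norm_num) h1T.le le_rfl
      rw [← intervalIntegral.integral_add_adjacent_intervals hA (hB.trans hC),
        ← intervalIntegral.integral_add_adjacent_intervals hB hC]
      have hmax : max (T - 1) 0 = T - 1 := max_eq_left (by linarith)
      calc ‖(∫ s in (0:ℝ)..r, f s) + ((∫ s in r..(1:ℝ), f s) + ∫ s in (1:ℝ)..T, f s)‖
          ≤ ‖∫ s in (0:ℝ)..r, f s‖ + (‖∫ s in r..(1:ℝ), f s‖ + ‖∫ s in (1:ℝ)..T, f s‖) :=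
          (norm_add_le _ _).trans (add_le_add_right (norm_add_le _ _) _)
        _ ≤ 2 * cα * M * (Hβ / (1 - p))
            + (cα * M * (Hβ / (q - 1)) + cα * M * Hβ * (T - 1)) :=
          add_le_add (P1 r hr0 le_rfl) (add_le_add (P2 1 hr1.le le_rfl) (P3 h1T))
        _ ≤ _ := by rw [goalEq, hmax]; linarith
end
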